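/- Let -1 < r₁ < ... < r_κ ≤ 0 be real numbers and m₁,...,m_κ positive integers with n = m₁ + ... + m_κ. The isometry group of E = ⊥_{l=1}^κ K^{m_l}(r_l) equals the orthonormal group O(m₁,...,m_κ, A_∞), consisting of matrices T ∈ GL_n(A_∞) whose block decomposition (T_{ij}) according to the partition satisfies T_{ii} ∈ GL_{m_i}(A_∞) for all i and T_{ij} ∈ m_∞^{m_i × m_j} for all j > i. -/

import Mathlib

open scoped Classical in
/-- The degree function `|·| = -v_∞` on `K = k(t)`, with `|0| = -∞`. -/
noncomputable def degK {k : Type*} [Field k] (a : RatFunc k) : WithBot ℝ :=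
  if a = 0 then ⊥ else ((a.intDegree : ℝ) : WithBot ℝ)

namespace Stmt14
open Finset
variable {k : Type*} [Field k]

theorem degK_of_ne {a : RatFunc k} (h : a ≠ 0) :
    degK a = ((a.intDegree : ℝ) : WithBot ℝ) := by simp [degK, h]

theorem degK_mul (a b : RatFunc k) : degK (a * b) = degK a + degK b := by
  by_cases ha : a = 0
  · simp [ha, degK]
  by_cases hb : b = 0
  · simp [hb, degK]
  rw [degK_of_ne ha, degK_of_ne hb, degK_of_ne (mul_ne_zero ha hb),
    RatFunc.intDegree_mul ha hb]
  push_cast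
  rfl

theorem degK_add_le (a b : RatFunc k) : degK (a + b) ≤ max (degK a) (degK b) := by
  by_cases hab : a + b = 0
  · simp [hab, degK]
  by_cases hb : b = 0
  · simp [hb]
  have h := RatFunc.intDegree_add_le hb hab
  rw [degK_of_ne hab, degK_of_ne hb]
  rcases le_or_gt a.intDegree b.intDegree with h1 | h1
  · refine le_max_of_le_right ?_
    have : (a+b).intDegree ≤ b.intDegree := by omega
    exact_mod_cast this
  · by_cases ha : a = 0
    · simp only [ha, zero_add] at hab ⊢
      exact le_max_of_le_right le_rfl
    rw [degK_of_ne ha]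
    refine le_max_of_le_left ?_
    have : (a+b).intDegree ≤ a.intDegree := by omega
    exact_mod_cast this

theorem degK_sum_le {ι : Type*} [DecidableEq ι] (s : Finset ι) (f : ι → RatFunc k) :
    degK (∑ i ∈ s, f i) ≤ s.sup fun i => degK (f i) := by
  induction s using Finset.induction_on with
  | empty => simp [degK]
  | insert _ _ h ih =>
    rw [Finset.sum_insert h, Finset.sup_insert]
    exact le_trans (degK_add_le _ _) (max_le_max le_rfl ih)

variable (k) in
/-- The valuation ring at infinity inside `K = k(t)`. -/
def Ainf : Subring (RatFunc k) where
  carrier := {f | f = 0 ∨ f.intDegree ≤ 0}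
  zero_mem' := Or.inl rfl
  one_mem' := Or.inr (le_of_eq RatFunc.intDegree_one)
  add_mem' := by
    rintro a b (rfl | ha) hb
    · simpa using hb
    rcases hb with rfl | hb
    · simpa using Or.inr ha
    by_cases hb0 : b = 0
    · subst hb0; simpa using Or.inr ha
    by_cases hab : a + b = 0
    · exact Or.inl hab
    · refine Or.inr ?_
      have := RatFunc.intDegree_add_le hb0 hab
      omega
  mul_mem' := by
    rintro a b (rfl | ha) hb
    · simp
    rcases hb with rfl | hb
    · simp
    by_cases ha0 : a = 0
    · simp [ha0]
    by_cases hb0 : b = 0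
    · simp [hb0]
    exact Or.inr (by rw [RatFunc.intDegree_mul ha0 hb0]; omega)
  neg_mem' := by
    rintro a (rfl | ha)
    · simp
    · exact Or.inr (by rw [RatFunc.intDegree_neg]; exact ha)

variable (k) in
/-- The maximal ideal of `Ainf`. -/
def minf : Ideal (Ainf k) where
  carrier := {x | (x : RatFunc k) = 0 ∨ (x : RatFunc k).intDegree < 0}
  zero_mem' := Or.inl rfl
  add_mem' := by
    rintro ⟨a, hha⟩ ⟨b, hhb⟩ ha hb
    simp only [Set.mem_setOf_eq] at ha hb ⊢
    rcases ha with ha | ha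
    · simp only [Subring.coe_add] at *
      rw [ha, zero_add]; exact hb
    rcases hb with hb | hb
    · simp only [Subring.coe_add] at *
      rw [hb, add_zero]; exact Or.inr ha
    simp only [Subring.coe_add] at *
    have hb0 : b ≠ 0 := by rintro rfl; simp at hb
    by_cases hab : a + b = 0
    · exact Or.inl hab
    · refine Or.inr ?_
      have := RatFunc.intDegree_add_le hb0 hab
      omega
  smul_mem' := by
    rintro ⟨c, hc⟩ ⟨x, hhx⟩ hx
    simp only [Set.mem_setOf_eq, smul_eq_mul] at hx ⊢
    rcases hx with hx | hx
    · simp only [Subring.coe_mul] at *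
      rw [hx, mul_zero]; exact Or.inl rfl
    by_cases hc0 : c = 0
    · simp [hc0]
    have hx0 : x ≠ 0 := by rintro rfl; simp at hx
    refine Or.inr ?_
    simp only [Subring.coe_mul]
    rw [RatFunc.intDegree_mul hc0 hx0]
    rcases hc with rfl | hc
    · exact absurd rfl hc0
    · omega

theorem mem_minf_iff {x : Ainf k} :
    x ∈ minf k ↔ (x : RatFunc k) = 0 ∨ (x : RatFunc k).intDegree < 0 := Iff.rfl

theorem not_mem_minf_iff {x : Ainf k} :
    x ∉ minf k ↔ (x : RatFunc k) ≠ 0 ∧ (x : RatFunc k).intDegree = 0 := by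
  rw [mem_minf_iff, not_or, not_lt]
  constructor
  · rintro ⟨h1, h2⟩
    exact ⟨h1, le_antisymm (x.2.resolve_left h1) h2⟩
  · rintro ⟨h1, h2⟩
    exact ⟨h1, le_of_eq h2.symm⟩

theorem isUnit_of_not_mem_minf {x : Ainf k} (hx : x ∉ minf k) : IsUnit x := by
  obtain ⟨hx0, hd⟩ := not_mem_minf_iff.1 hx
  have hinv : (x : RatFunc k)⁻¹ ∈ Ainf k := by
    refine Or.inr ?_
    have h1 : ((x : RatFunc k) * (x : RatFunc k)⁻¹).intDegree = 0 := by
      rw [mul_inv_cancel₀ hx0, RatFunc.intDegree_one]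
    rw [RatFunc.intDegree_mul hx0 (inv_ne_zero hx0)] at h1
    omega
  refine isUnit_iff_exists_inv.2 ⟨⟨(x : RatFunc k)⁻¹, hinv⟩, ?_⟩
  ext
  exact mul_inv_cancel₀ hx0

instance minf_isMaximal : (minf k).IsMaximal := by
  rw [Ideal.isMaximal_iff]
  constructor
  · rw [mem_minf_iff]
    simp
  · intro J x hIJ hxI hxJ
    obtain ⟨y, hy⟩ := isUnit_iff_exists_inv.1 (isUnit_of_not_mem_minf hxI)
    rw [← hy]
    exact J.mul_mem_right y hxJ

variable (k) in
/-- The residue field of `Ainf`. -/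
abbrev Resk := Ainf k ⧸ minf k

noncomputable instance : Field (Resk k) := Ideal.Quotient.field _

variable (k) in
noncomputable def res : Ainf k →+* Resk k := Ideal.Quotient.mk _

theorem res_eq_zero_iff {x : Ainf k} : res k x = 0 ↔ x ∈ minf k :=
  Ideal.Quotient.eq_zero_iff_mem

theorem res_surjective : Function.Surjective (res k) :=
  Ideal.Quotient.mk_surjective

theorem sup_add_le' {ι : Type*} (s : Finset ι) (f : ι → WithBot ℝ) (c d : WithBot ℝ)
    (h : ∀ i ∈ s, f i + c ≤ d) : s.sup f + c ≤ d := by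
  rcases s.eq_empty_or_nonempty with rfl | hne
  · simp
  · obtain ⟨i, hi, hsup⟩ := Finset.exists_mem_eq_sup s hne f
    rw [hsup]; exact h i hi

section
variable {κ : ℕ} {m : Fin κ → ℕ}

theorem degK_le_zero {a : RatFunc k} (h : a = 0 ∨ a.intDegree ≤ 0) :
    degK a ≤ ((0:ℝ) : WithBot ℝ) := by
  rcases h with rfl | h
  · simp [degK]
  · by_cases h0 : a = 0
    · simp [degK, h0]
    · rw [degK_of_ne h0]
      exact_mod_cast h

/-- Entrywise conditions give the pointwise bound `deg M p q + r_q ≤ r_p`. -/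
theorem entry_bound (r : Fin κ → ℝ) (hr1 : ∀ l, -1 < r l) (hr2 : ∀ l, r l ≤ 0)
    (hrmono : StrictMono r)
    {M : Matrix ((l : Fin κ) × Fin (m l)) ((l : Fin κ) × Fin (m l)) (RatFunc k)}
    (hA : ∀ p q, M p q = 0 ∨ (M p q).intDegree ≤ 0)
    (hU : ∀ p q, p.1 < q.1 → M p q = 0 ∨ (M p q).intDegree < 0)
    (p q : (l : Fin κ) × Fin (m l)) :
    degK (M p q) + ((r q.1 : ℝ) : WithBot ℝ) ≤ ((r p.1 : ℝ) : WithBot ℝ) := by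
  by_cases h0 : M p q = 0
  · simp [degK, h0]
  rw [degK_of_ne h0, ← WithBot.coe_add, WithBot.coe_le_coe]
  rcases lt_trichotomy p.1 q.1 with hlt | heq | hgt
  · have hd : (M p q).intDegree < 0 := (hU p q hlt).resolve_left h0
    have hd' : (M p q).intDegree ≤ -1 := by omega
    have hd1 : ((M p q).intDegree : ℝ) ≤ -1 := by exact_mod_cast hd'
    have := hr1 p.1
    have := hr2 q.1
    linarith
  · have hd : (M p q).intDegree ≤ 0 := (hA p q).resolve_left h0
    have hd1 : ((M p q).intDegree : ℝ) ≤ 0 := by exact_mod_cast hd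
    rw [heq]; linarith
  · have hd : (M p q).intDegree ≤ 0 := (hA p q).resolve_left h0
    have hd1 : ((M p q).intDegree : ℝ) ≤ 0 := by exact_mod_cast hd
    have := hrmono hgt
    linarith

/-- The norm does not increase under `vecMul` by a matrix with entry bounds. -/
theorem norm_vecMul_le (r : Fin κ → ℝ)
    {M : Matrix ((l : Fin κ) × Fin (m l)) ((l : Fin κ) × Fin (m l)) (RatFunc k)}
    (hM : ∀ p q, degK (M p q) + ((r q.1 : ℝ) : WithBot ℝ) ≤ ((r p.1 : ℝ) : WithBot ℝ))
    (v : ((l : Fin κ) × Fin (m l)) → RatFunc k) :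
    (univ.sup fun q => degK (Matrix.vecMul v M q) + ((r q.1 : ℝ) : WithBot ℝ)) ≤
      univ.sup fun p => degK (v p) + ((r p.1 : ℝ) : WithBot ℝ) := by
  classical
  refine Finset.sup_le fun q _ => ?_
  have h1 : degK (Matrix.vecMul v M q) ≤ univ.sup fun p => degK (v p) + degK (M p q) := by
    have h2 : Matrix.vecMul v M q = ∑ p, v p * M p q := by
      simp [Matrix.vecMul, dotProduct]
    rw [h2]
    refine le_trans (degK_sum_le _ _) (Finset.sup_le fun p hp => ?_)
    rw [degK_mul]
    exact Finset.le_sup (f := fun p => degK (v p) + degK (M p q)) (Finset.mem_univ p)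
  refine le_trans (add_le_add h1 le_rfl) ?_
  refine sup_add_le' _ _ _ _ fun p _ => ?_
  rw [add_assoc]
  refine le_trans (add_le_add le_rfl (hM p q)) ?_
  exact Finset.le_sup (f := fun p => degK (v p) + ((r p.1 : ℝ) : WithBot ℝ)) (Finset.mem_univ p)

/-- Block-lower-triangular determinant over the sigma type. -/
theorem sigma_det_blocks {R : Type*} [CommRing R] (hm : ∀ l, 0 < m l)
    (M : Matrix ((l : Fin κ) × Fin (m l)) ((l : Fin κ) × Fin (m l)) R)
    (h : ∀ p q : (l : Fin κ) × Fin (m l), p.1 < q.1 → M p q = 0) :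
    M.det = ∏ l : Fin κ, (Matrix.of fun a b : Fin (m l) => M ⟨l, a⟩ ⟨l, b⟩).det := by
  classical
  set b : ((l : Fin κ) × Fin (m l)) → (Fin κ)ᵒᵈ := fun p => OrderDual.toDual p.1 with hb
  have hbt : M.BlockTriangular b := by
    intro p q hpq
    exact h p q hpq
  rw [hbt.det]
  have hsurj : Function.Surjective b := by
    intro l
    exact ⟨⟨OrderDual.ofDual l, ⟨0, hm _⟩⟩, rfl⟩
  rw [Finset.image_univ_of_surjective hsurj]
  rw [← Equiv.prod_comp (OrderDual.toDual (α := Fin κ))]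
  refine Finset.prod_congr rfl fun l _ => ?_
  let e : {p : (l' : Fin κ) × Fin (m l') // b p = OrderDual.toDual l} ≃ Fin (m l) :=
    { toFun := fun x => Fin.cast (congrArg m (congrArg OrderDual.ofDual x.2)) x.1.2
      invFun := fun a => ⟨⟨l, a⟩, rfl⟩
      left_inv := by rintro ⟨⟨l', a⟩, h⟩; cases (congrArg OrderDual.ofDual h); rfl
      right_inv := by intro a; rfl }
  rw [← Matrix.det_reindex_self e (M.toSquareBlock b (OrderDual.toDual l))]
  congr 1


theorem degK_zero : degK (0 : RatFunc k) = ⊥ := by simp [degK]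

set_option maxHeartbeats 1000000
set_option synthInstance.maxHeartbeats 400000

theorem forward {κ : ℕ} {m : Fin κ → ℕ} (hm : ∀ l, 0 < m l)
    (r : Fin κ → ℝ) (hr1 : ∀ l, -1 < r l) (hr2 : ∀ l, r l ≤ 0) (hrmono : StrictMono r)
    (T : Matrix ((l : Fin κ) × Fin (m l)) ((l : Fin κ) × Fin (m l)) (RatFunc k))
    (H : ∀ v : ((l : Fin κ) × Fin (m l)) → RatFunc k,
        (Finset.univ.sup fun p : (l : Fin κ) × Fin (m l) =>
            degK (Matrix.vecMul v T p) + ((r p.1 : ℝ) : WithBot ℝ)) =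
        (Finset.univ.sup fun p : (l : Fin κ) × Fin (m l) =>
            degK (v p) + ((r p.1 : ℝ) : WithBot ℝ))) :
    ((∀ p q, T p q = 0 ∨ (T p q).intDegree ≤ 0) ∧
      T.det ≠ 0 ∧ T.det.intDegree = 0 ∧
      (∀ l : Fin κ,
        (Matrix.of fun a b : Fin (m l) => T ⟨l, a⟩ ⟨l, b⟩).det ≠ 0 ∧
        (Matrix.of fun a b : Fin (m l) => T ⟨l, a⟩ ⟨l, b⟩).det.intDegree = 0 ∧
        (∀ a b : Fin (m l), T ⟨l, a⟩ ⟨l, b⟩ = 0 ∨ (T ⟨l, a⟩ ⟨l, b⟩).intDegree ≤ 0)) ∧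
      (∀ p q : (l : Fin κ) × Fin (m l), p.1 < q.1 →
        T p q = 0 ∨ (T p q).intDegree < 0)) := by
  classical
  -- Step 1: entrywise bounds from rows
  have key : ∀ p q : (l : Fin κ) × Fin (m l),
      degK (T p q) + ((r q.1 : ℝ) : WithBot ℝ) ≤ ((r p.1 : ℝ) : WithBot ℝ) := by
    intro p q
    set E : ((l' : Fin κ) × Fin (m l')) → RatFunc k := fun q' => if q' = p then 1 else 0 with hE
    have hEdef : ∀ q', E q' = if q' = p then (1 : RatFunc k) else 0 := fun _ => rfl
    have h := H E
    have hvm : ∀ q', Matrix.vecMul E T q' = T p q' := by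
      intro q'
      have h2 : Matrix.vecMul E T q' = ∑ i, E i * T i q' := by
        simp [Matrix.vecMul, dotProduct]
      rw [h2, Finset.sum_eq_single p
        (fun i _ hi => by rw [hEdef, if_neg hi, zero_mul])
        (fun hp => absurd (Finset.mem_univ p) hp), hEdef, if_pos rfl, one_mul]
    have hEp : degK (E p) + ((r p.1 : ℝ) : WithBot ℝ) = ((r p.1 : ℝ) : WithBot ℝ) := by
      rw [hEdef, if_pos rfl, degK_of_ne (one_ne_zero (α := RatFunc k)), RatFunc.intDegree_one, ← WithBot.coe_add]
      norm_num
    have hRHS : (Finset.univ.sup fun q' : (l : Fin κ) × Fin (m l) =>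
        degK (E q') + ((r q'.1 : ℝ) : WithBot ℝ)) = ((r p.1 : ℝ) : WithBot ℝ) := by
      apply le_antisymm
      · refine Finset.sup_le fun q' _ => ?_
        by_cases hq : q' = p
        · subst hq
          exact le_of_eq hEp
        · rw [hEdef, if_neg hq, degK_zero, WithBot.bot_add]
          exact bot_le
      · calc ((r p.1 : ℝ) : WithBot ℝ) = degK (E p) + ((r p.1 : ℝ) : WithBot ℝ) := hEp.symm
          _ ≤ _ := Finset.le_sup (f := fun q' : (l : Fin κ) × Fin (m l) =>
              degK (E q') + ((r q'.1 : ℝ) : WithBot ℝ)) (Finset.mem_univ p)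
    rw [hRHS] at h
    calc degK (T p q) + ((r q.1 : ℝ) : WithBot ℝ)
        = degK (Matrix.vecMul E T q) + ((r q.1 : ℝ) : WithBot ℝ) := by rw [hvm]
      _ ≤ Finset.univ.sup fun q' : (l : Fin κ) × Fin (m l) =>
            degK (Matrix.vecMul E T q') + ((r q'.1 : ℝ) : WithBot ℝ) :=
          Finset.le_sup (f := fun q' : (l : Fin κ) × Fin (m l) =>
            degK (Matrix.vecMul E T q') + ((r q'.1 : ℝ) : WithBot ℝ)) (Finset.mem_univ q)
      _ = ((r p.1 : ℝ) : WithBot ℝ) := h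
  have hA : ∀ p q, T p q = 0 ∨ (T p q).intDegree ≤ 0 := by
    intro p q
    by_cases h0 : T p q = 0
    · exact Or.inl h0
    refine Or.inr ?_
    have h := key p q
    rw [degK_of_ne h0, ← WithBot.coe_add, WithBot.coe_le_coe] at h
    have h1 : ((T p q).intDegree : ℝ) < 1 := by
      have := hr1 q.1
      have := hr2 p.1
      linarith
    have : (T p q).intDegree < 1 := by exact_mod_cast h1
    omega
  have hUp : ∀ p q : (l : Fin κ) × Fin (m l), p.1 < q.1 →
      T p q = 0 ∨ (T p q).intDegree < 0 := by
    intro p q hpq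
    by_cases h0 : T p q = 0
    · exact Or.inl h0
    refine Or.inr ?_
    have h := key p q
    rw [degK_of_ne h0, ← WithBot.coe_add, WithBot.coe_le_coe] at h
    have h1 : ((T p q).intDegree : ℝ) < 0 := by
      have := hrmono hpq
      linarith
    exact_mod_cast h1
  -- The matrix over the valuation ring and its residue matrix
  have hAmem : ∀ p q, T p q ∈ Ainf k := fun p q => hA p q
  let T' : Matrix ((l : Fin κ) × Fin (m l)) ((l : Fin κ) × Fin (m l)) (Ainf k) :=
    fun p q => ⟨T p q, hAmem p q⟩
  let Tb : Matrix ((l : Fin κ) × Fin (m l)) ((l : Fin κ) × Fin (m l)) (Resk k) :=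
    T'.map (res k)
  have hTbU : ∀ p q : (l : Fin κ) × Fin (m l), p.1 < q.1 → Tb p q = 0 := by
    intro p q h
    exact res_eq_zero_iff.2 (mem_minf_iff.2 (hUp p q h))
  -- Step 2: diagonal residue blocks are nonsingular
  have hdiag : ∀ l : Fin κ,
      (Matrix.of fun a b : Fin (m l) => Tb ⟨l, a⟩ ⟨l, b⟩).det ≠ 0 := by
    intro l hdet0
    obtain ⟨w, hw0, hwT⟩ := Matrix.exists_vecMul_eq_zero_iff.2 hdet0
    choose w' hw' using fun b => res_surjective (k := k) (w b)
    let v : ((l' : Fin κ) × Fin (m l')) → RatFunc k :=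
      fun p => if h : p.1 = l then ((w' (Fin.cast (congrArg m h) p.2) : Ainf k) : RatFunc k)
        else 0
    have hvdef : ∀ p : (l' : Fin κ) × Fin (m l'), v p =
        if h : p.1 = l then ((w' (Fin.cast (congrArg m h) p.2) : Ainf k) : RatFunc k) else 0 :=
      fun p => rfl
    obtain ⟨b0, hb0⟩ := Function.ne_iff.1 hw0
    have hb0' : w b0 ≠ 0 := hb0
    have hwb0 : w' b0 ∉ minf k := fun hmem => hb0' (by rw [← hw' b0]; exact res_eq_zero_iff.2 hmem)
    obtain ⟨hwb0ne, hwb0deg⟩ := not_mem_minf_iff.1 hwb0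
    have hvlb0 : v ⟨l, b0⟩ = ((w' b0 : Ainf k) : RatFunc k) := by
      rw [hvdef]
      simp
    have hNv : (Finset.univ.sup fun p : (l' : Fin κ) × Fin (m l') =>
        degK (v p) + ((r p.1 : ℝ) : WithBot ℝ)) = ((r l : ℝ) : WithBot ℝ) := by
      apply le_antisymm
      · refine Finset.sup_le fun p _ => ?_
        by_cases hp : p.1 = l
        · have hvp : degK (v p) ≤ ((0:ℝ) : WithBot ℝ) := by
            rw [hvdef, dif_pos hp]
            exact degK_le_zero (w' _).2
          refine le_trans (add_le_add hvp le_rfl) ?_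
          rw [← WithBot.coe_add, zero_add, WithBot.coe_le_coe, hp]
        · rw [hvdef, dif_neg hp, degK_zero, WithBot.bot_add]
          exact bot_le
      · have hle : degK (v ⟨l, b0⟩) + ((r l : ℝ) : WithBot ℝ) = ((r l : ℝ) : WithBot ℝ) := by
          rw [hvlb0, degK_of_ne hwb0ne, hwb0deg, ← WithBot.coe_add]
          norm_num
        calc ((r l : ℝ) : WithBot ℝ) = degK (v ⟨l, b0⟩) + ((r l : ℝ) : WithBot ℝ) := hle.symm
          _ ≤ _ := Finset.le_sup (f := fun p : (l' : Fin κ) × Fin (m l') =>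
              degK (v p) + ((r p.1 : ℝ) : WithBot ℝ)) (Finset.mem_univ (⟨l, b0⟩ : (l' : Fin κ) × Fin (m l')))
    have hsum : ∀ q : (l' : Fin κ) × Fin (m l'), Matrix.vecMul v T q =
        ((∑ b', w' b' * T' ⟨l, b'⟩ q : Ainf k) : RatFunc k) := by
      intro q
      have h2 : Matrix.vecMul v T q = ∑ p, v p * T p q := by
        simp [Matrix.vecMul, dotProduct]
      rw [h2, ← Finset.univ_sigma_univ, Finset.sum_sigma]
      rw [Finset.sum_eq_single l]
      · rw [show ((∑ b', w' b' * T' ⟨l, b'⟩ q : Ainf k) : RatFunc k) =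
            ∑ b', ((w' b' * T' ⟨l, b'⟩ q : Ainf k) : RatFunc k) from
          map_sum ((Ainf k).subtype) _ Finset.univ]
        refine Finset.sum_congr rfl fun b' _ => ?_
        have hvb : v ⟨l, b'⟩ = ((w' b' : Ainf k) : RatFunc k) := by rw [hvdef]; simp
        rw [hvb]
        rfl
      · intro l' _ hl'
        refine Finset.sum_eq_zero fun b' _ => ?_
        rw [hvdef, dif_neg hl', zero_mul]
      · intro hl; exact absurd (Finset.mem_univ l) hl
    have hmem_bound : ∀ (j : Fin κ) (bb : Fin (m j)),
        (∑ b', w' b' * T' ⟨l, b'⟩ ⟨j, bb⟩ : Ainf k) ∈ minf k →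
        degK (Matrix.vecMul v T ⟨j, bb⟩) + ((r j : ℝ) : WithBot ℝ) < ((r l : ℝ) : WithBot ℝ) := by
      intro j bb hmem
      rw [hsum ⟨j, bb⟩]
      rcases mem_minf_iff.1 hmem with hz | hdeg
      · rw [hz, degK_zero, WithBot.bot_add]
        exact WithBot.bot_lt_coe _
      · have hz : ((∑ b', w' b' * T' ⟨l, b'⟩ ⟨j, bb⟩ : Ainf k) : RatFunc k) ≠ 0 := by
          intro h0; rw [h0] at hdeg; simp at hdeg
        rw [degK_of_ne hz, ← WithBot.coe_add, WithBot.coe_lt_coe]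
        have h1 : (((∑ b', w' b' * T' ⟨l, b'⟩ ⟨j, bb⟩ : Ainf k) : RatFunc k).intDegree : ℝ) ≤ -1 := by
          have h2 : ((∑ b', w' b' * T' ⟨l, b'⟩ ⟨j, bb⟩ : Ainf k) : RatFunc k).intDegree ≤ -1 := by
            omega
          exact_mod_cast h2
        have := hr1 l
        have := hr2 j
        linarith
    have hlt : (Finset.univ.sup fun q : (l' : Fin κ) × Fin (m l') =>
        degK (Matrix.vecMul v T q) + ((r q.1 : ℝ) : WithBot ℝ)) < ((r l : ℝ) : WithBot ℝ) := by
      rw [Finset.sup_lt_iff (WithBot.bot_lt_coe _)]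
      rintro ⟨j, b⟩ _
      show degK (Matrix.vecMul v T ⟨j, b⟩) + ((r j : ℝ) : WithBot ℝ) < ((r l : ℝ) : WithBot ℝ)
      rcases lt_trichotomy j l with hjl | hjl | hjl
      · -- j < l : entries in the ring, r j < r l
        have h1 : degK (Matrix.vecMul v T ⟨j, b⟩) ≤ ((0:ℝ) : WithBot ℝ) := by
          rw [hsum ⟨j, b⟩]; exact degK_le_zero (∑ b', w' b' * T' ⟨l, b'⟩ ⟨j, b⟩ : Ainf k).2
        calc degK (Matrix.vecMul v T ⟨j, b⟩) + ((r j : ℝ) : WithBot ℝ)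
            ≤ ((0:ℝ) : WithBot ℝ) + ((r j : ℝ) : WithBot ℝ) := add_le_add h1 le_rfl
          _ = ((r j : ℝ) : WithBot ℝ) := by rw [← WithBot.coe_add, zero_add]
          _ < ((r l : ℝ) : WithBot ℝ) := WithBot.coe_lt_coe.2 (hrmono hjl)
      · -- j = l : the residue of the sum vanishes
        have hq : (⟨j, b⟩ : (l' : Fin κ) × Fin (m l')) = ⟨l, Fin.cast (congrArg m hjl) b⟩ := by
          subst hjl; rfl
        rw [hq]
        have hrj : r j = r l := by rw [hjl]
        rw [hrj]
        set b'' : Fin (m l) := Fin.cast (congrArg m hjl) b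
        refine hmem_bound l b'' ?_
        rw [← res_eq_zero_iff,
          show res k (∑ b', w' b' * T' ⟨l, b'⟩ ⟨l, b''⟩) =
              ∑ b', res k (w' b' * T' ⟨l, b'⟩ ⟨l, b''⟩) from
            map_sum (res k) _ Finset.univ]
        have hterm : ∀ b', res k (w' b' * T' ⟨l, b'⟩ ⟨l, b''⟩) =
            w b' * (Matrix.of fun a c : Fin (m l) => Tb ⟨l, a⟩ ⟨l, c⟩) b' b'' := by
          intro b'
          rw [map_mul, hw']
          rfl
        rw [Finset.sum_congr rfl fun b' _ => hterm b']
        have h3 := congrFun hwT b''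
        simpa [Matrix.vecMul, dotProduct] using h3
      · -- l < j : entries of the off-diagonal block are in the maximal ideal
        refine hmem_bound j b ?_
        refine Ideal.sum_mem _ fun b' _ => ?_
        exact Ideal.mul_mem_left _ _ (mem_minf_iff.2 (hUp ⟨l, b'⟩ ⟨j, b⟩ hjl))
    rw [H v, hNv] at hlt
    exact lt_irrefl _ hlt
  -- Step 3: assemble
  have hTmap : T = T'.map (Ainf k).subtype := by ext p q; rfl
  have hdet_res : res k T'.det = Tb.det := RingHom.map_det _ _
  have hdet_sub : ((T'.det : Ainf k) : RatFunc k) = T.det := by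
    rw [hTmap]
    exact RingHom.map_det ((Ainf k).subtype) T'
  have hTbdet : Tb.det ≠ 0 := by
    rw [sigma_det_blocks hm Tb hTbU]
    exact Finset.prod_ne_zero_iff.2 fun l _ => hdiag l
  have hdetnm : T'.det ∉ minf k := fun hmem => hTbdet (hdet_res ▸ res_eq_zero_iff.2 hmem)
  obtain ⟨hdet_ne, hdet_deg⟩ := not_mem_minf_iff.1 hdetnm
  rw [hdet_sub] at hdet_ne hdet_deg
  refine ⟨hA, hdet_ne, hdet_deg, fun l => ?_, hUp⟩
  let B' : Matrix (Fin (m l)) (Fin (m l)) (Ainf k) :=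
    Matrix.of fun a b => T' ⟨l, a⟩ ⟨l, b⟩
  have hB'res : (res k) B'.det = (Matrix.of fun a b : Fin (m l) => Tb ⟨l, a⟩ ⟨l, b⟩).det := by
    exact RingHom.map_det _ _
  have hB'nm : B'.det ∉ minf k := fun hmem => hdiag l (hB'res ▸ res_eq_zero_iff.2 hmem)
  obtain ⟨hB'ne, hB'deg⟩ := not_mem_minf_iff.1 hB'nm
  have hB'sub : ((B'.det : Ainf k) : RatFunc k) =
      (Matrix.of fun a b : Fin (m l) => T ⟨l, a⟩ ⟨l, b⟩).det :=
    RingHom.map_det ((Ainf k).subtype) B'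
  rw [hB'sub] at hB'ne hB'deg
  exact ⟨hB'ne, hB'deg, fun a b => hA ⟨l, a⟩ ⟨l, b⟩⟩


theorem backward {κ : ℕ} {m : Fin κ → ℕ}
    (r : Fin κ → ℝ) (hr1 : ∀ l, -1 < r l) (hr2 : ∀ l, r l ≤ 0) (hrmono : StrictMono r)
    (T : Matrix ((l : Fin κ) × Fin (m l)) ((l : Fin κ) × Fin (m l)) (RatFunc k))
    (hA : ∀ p q, T p q = 0 ∨ (T p q).intDegree ≤ 0)
    (hdet_ne : T.det ≠ 0) (hdet_deg : T.det.intDegree = 0)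
    (hUp : ∀ p q : (l : Fin κ) × Fin (m l), p.1 < q.1 →
        T p q = 0 ∨ (T p q).intDegree < 0)
    (v : ((l : Fin κ) × Fin (m l)) → RatFunc k) :
    (Finset.univ.sup fun p : (l : Fin κ) × Fin (m l) =>
        degK (Matrix.vecMul v T p) + ((r p.1 : ℝ) : WithBot ℝ)) =
    (Finset.univ.sup fun p : (l : Fin κ) × Fin (m l) =>
        degK (v p) + ((r p.1 : ℝ) : WithBot ℝ)) := by
  classical
  have hAmem : ∀ p q, T p q ∈ Ainf k := fun p q => hA p q
  let T' : Matrix ((l : Fin κ) × Fin (m l)) ((l : Fin κ) × Fin (m l)) (Ainf k) :=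
    fun p q => ⟨T p q, hAmem p q⟩
  have hTmap : T = T'.map (Ainf k).subtype := by ext p q; rfl
  have hdet_sub : ((T'.det : Ainf k) : RatFunc k) = T.det := by
    rw [hTmap]
    exact RingHom.map_det ((Ainf k).subtype) T'
  have hdetnm : T'.det ∉ minf k := by
    rw [not_mem_minf_iff, hdet_sub]
    exact ⟨hdet_ne, hdet_deg⟩
  have hu : IsUnit T'.det := isUnit_of_not_mem_minf hdetnm
  have hinv : Invertible T' := T'.invertibleOfIsUnitDet hu
  let S' := ⅟T'
  have hTS : T' * S' = 1 := mul_invOf_self T'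
  -- residue matrices
  let Tb := T'.map (res k)
  let Sb := S'.map (res k)
  have hTbSb : Tb * Sb = 1 := by
    rw [← Matrix.map_mul, hTS, Matrix.map_one _ (map_zero _) (map_one _)]
  have hbt : Tb.BlockTriangular (fun p => OrderDual.toDual p.1) := by
    intro p q h'
    exact res_eq_zero_iff.2 (mem_minf_iff.2 (hUp p q h'))
  have hTbinv : Invertible Tb := invertibleOfRightInverse Tb Sb hTbSb
  have hSb : Sb = Tb⁻¹ := (Matrix.inv_eq_right_inv hTbSb).symm
  have hbtinv := Matrix.blockTriangular_inv_of_blockTriangular hbt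
  let S := S'.map (Ainf k).subtype
  have hSA : ∀ p q, S p q = 0 ∨ (S p q).intDegree ≤ 0 := fun p q => (S' p q).2
  have hSU : ∀ p q : (l : Fin κ) × Fin (m l), p.1 < q.1 →
      S p q = 0 ∨ (S p q).intDegree < 0 := by
    intro p q h'
    have hz : Sb p q = 0 := by
      rw [hSb]
      exact hbtinv (show (fun p : (l : Fin κ) × Fin (m l) => OrderDual.toDual p.1) q <
        (fun p : (l : Fin κ) × Fin (m l) => OrderDual.toDual p.1) p from h')
    exact mem_minf_iff.1 (res_eq_zero_iff.1 hz)
  have hvmul : v = Matrix.vecMul (Matrix.vecMul v T) S := by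
    rw [Matrix.vecMul_vecMul, hTmap, ← Matrix.map_mul, hTS,
      Matrix.map_one _ (map_zero _) (map_one _), Matrix.vecMul_one]
  apply le_antisymm
  · exact norm_vecMul_le r (entry_bound r hr1 hr2 hrmono hA hUp) v
  · calc (Finset.univ.sup fun p : (l : Fin κ) × Fin (m l) =>
          degK (v p) + ((r p.1 : ℝ) : WithBot ℝ))
        = Finset.univ.sup fun p : (l : Fin κ) × Fin (m l) =>
            degK (Matrix.vecMul (Matrix.vecMul v T) S p) + ((r p.1 : ℝ) : WithBot ℝ) := by
          rw [← hvmul]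
      _ ≤ _ := norm_vecMul_le r (entry_bound r hr1 hr2 hrmono hSA hSU) _

end
end Stmt14

/-- For `-1 < r₁ < ⋯ < r_κ ≤ 0` and positive multiplicities `m_l`, the
isometry group of `E = ⊥_{l} K^{m_l}(r_l)` (coordinates indexed by `Σ l, Fin (m l)`, norm
`‖v‖ = max_p (deg v_p + r_{block p})`) is the orthonormal group `O(m₁,…,m_κ, A_∞)`:
matrices in `GL_n(A_∞)` whose diagonal blocks lie in `GL_{m_l}(A_∞)` and whose blocks
above the diagonal have entries in `m_∞` (degree `< 0`). -/
theorem stmt14 {k : Type*} [Field k] (κ : ℕ) (m : Fin κ → ℕ) (hm : ∀ l, 0 < m l)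
    (r : Fin κ → ℝ) (hr1 : ∀ l, -1 < r l) (hr2 : ∀ l, r l ≤ 0) (hrmono : StrictMono r)
    (T : Matrix ((l : Fin κ) × Fin (m l)) ((l : Fin κ) × Fin (m l)) (RatFunc k)) :
    (∀ v : ((l : Fin κ) × Fin (m l)) → RatFunc k,
        (Finset.univ.sup fun p : (l : Fin κ) × Fin (m l) =>
            degK (Matrix.vecMul v T p) + ((r p.1 : ℝ) : WithBot ℝ)) =
        (Finset.univ.sup fun p : (l : Fin κ) × Fin (m l) =>
            degK (v p) + ((r p.1 : ℝ) : WithBot ℝ))) ↔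
    ((∀ p q, T p q = 0 ∨ (T p q).intDegree ≤ 0) ∧
      T.det ≠ 0 ∧ T.det.intDegree = 0 ∧
      (∀ l : Fin κ,
        (Matrix.of fun a b : Fin (m l) => T ⟨l, a⟩ ⟨l, b⟩).det ≠ 0 ∧
        (Matrix.of fun a b : Fin (m l) => T ⟨l, a⟩ ⟨l, b⟩).det.intDegree = 0 ∧
        (∀ a b : Fin (m l), T ⟨l, a⟩ ⟨l, b⟩ = 0 ∨ (T ⟨l, a⟩ ⟨l, b⟩).intDegree ≤ 0)) ∧
      (∀ p q : (l : Fin κ) × Fin (m l), p.1 < q.1 →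
        T p q = 0 ∨ (T p q).intDegree < 0)) := by
  constructor
  · intro H
    exact Stmt14.forward hm r hr1 hr2 hrmono T H
  · rintro ⟨hA, hdet_ne, hdet_deg, _hblocks, hUp⟩ v
    exact Stmt14.backward r hr1 hr2 hrmono T hA hdet_ne hdet_deg hUp v
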